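/- Let n ≥ 2, 1 < p, p̄₁, p̄₂ < ∞, and 0 < ε < 1. Define f_ε on ℝⁿ by f_ε(x) = 0 for |x| ≤ 1 and f_ε(x) = |x|^{-(n/p + ε)} for |x| > 1. Then ‖H f_ε‖_{L^p_{|x|}L^{p̄₂}_θ} ≥ n · ε^ε · (1 − ε^{n − ε − n/p})/(n − ε − n/p) · ω_n^{1/p̄₂ − 1/p̄₁} · ‖f_ε‖_{L^p_{|x|}L^{p̄₁}_θ}. -/

import Mathlib

open MeasureTheory Metric Set

noncomputable section

/-- Euclidean space ℝⁿ. -/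
abbrev Euc (n : ℕ) := EuclideanSpace ℝ (Fin n)

/-- Volume of the unit ball in ℝⁿ: Ω_n = π^(n/2) / Γ(1 + n/2). -/
def ballVol (n : ℕ) : ℝ := Real.pi ^ ((n : ℝ) / 2) / Real.Gamma (1 + (n : ℝ) / 2)

/-- Surface measure of the unit sphere S^{n-1}: ω_n = 2π^(n/2) / Γ(n/2). -/
def sphArea (n : ℕ) : ℝ := 2 * Real.pi ^ ((n : ℝ) / 2) / Real.Gamma ((n : ℝ) / 2)

/-- The surface measure dθ on the unit sphere S^{n-1} ⊂ ℝⁿ (total mass ω_n = n·Ω_n). -/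
def sphereMeasure (n : ℕ) : Measure (sphere (0 : Euc n) 1) :=
  (volume : Measure (Euc n)).toSphere

/-- Mixed radial-angular norm
‖f‖ = (∫₀^∞ (∫_{S^{n-1}} |f(rθ)|^{p̄} dθ)^{p/p̄} r^{n-1} dr)^{1/p}. -/
def mixedNorm (n : ℕ) (p pb : ℝ) (f : Euc n → ℝ) : ℝ :=
  (∫ r in Ioi (0 : ℝ),
      (∫ θ, |f (r • (θ : Euc n))| ^ pb ∂(sphereMeasure n)) ^ (p / pb) * r ^ ((n : ℝ) - 1)) ^ (1 / p)

/-- Weak mixed radial-angular norm: sup_{λ>0} λ‖χ_{|f|>λ}‖. -/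
def wMixedNorm (n : ℕ) (p pb : ℝ) (f : Euc n → ℝ) : ℝ :=
  ⨆ l : {l : ℝ // 0 < l},
    l.1 * mixedNorm n p pb (indicator {x | l.1 < |f x|} fun _ => (1 : ℝ))

/-- n-dimensional Hardy operator H f(x) = (Ω_n |x|ⁿ)⁻¹ ∫_{|y|<|x|} f(y) dy. -/
def hardyOp (n : ℕ) (f : Euc n → ℝ) (x : Euc n) : ℝ :=
  (ballVol n * ‖x‖ ^ n)⁻¹ * ∫ y in {y : Euc n | ‖y‖ < ‖x‖}, f y

/-- Dual Hardy operator H* f(x) = ∫_{|y|≥|x|} f(y)/(Ω_n |y|ⁿ) dy. -/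
def dualHardyOp (n : ℕ) (f : Euc n → ℝ) (x : Euc n) : ℝ :=
  ∫ y in {y : Euc n | ‖x‖ ≤ ‖y‖}, f y / (ballVol n * ‖y‖ ^ n)

/-- Fractional Hardy operator H_β f(x) = (Ω_n^{1/n}|x|)^{β-n} ∫_{|y|<|x|} f(y) dy. -/
def fracHardyOp (n : ℕ) (β : ℝ) (f : Euc n → ℝ) (x : Euc n) : ℝ :=
  (ballVol n ^ ((1 : ℝ) / n) * ‖x‖) ^ (-((n : ℝ) - β)) * ∫ y in {y : Euc n | ‖y‖ < ‖x‖}, f y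

/-- L^p norm on ℝⁿ. -/
def lpNorm (n : ℕ) (p : ℝ) (f : Euc n → ℝ) : ℝ := (∫ x : Euc n, |f x| ^ p) ^ (1 / p)

/-- Beta function B(a,b) = ∫₀¹ t^{a-1}(1-t)^{b-1} dt. -/
def betaFn (a b : ℝ) : ℝ := ∫ t in (0 : ℝ)..1, t ^ (a - 1) * (1 - t) ^ (b - 1)

/-- Sharp constant C_{p,q,n,β} = (p'/q)^{1/q}((n/(qβ))·B(n/(qβ), n/(q'β)))^{-β/n}. -/
def fracHardyConst (p q : ℝ) (n : ℕ) (β : ℝ) : ℝ :=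
  (p / (p - 1) / q) ^ (1 / q) *
    ((n / (q * β)) * betaFn ((n : ℝ) / (q * β)) ((n : ℝ) / ((q / (q - 1)) * β))) ^ (-(β / (n : ℝ)))


private lemma ballVol_pos (n : ℕ) : 0 < ballVol n :=
  div_pos (Real.rpow_pos_of_pos Real.pi_pos _) (Real.Gamma_pos_of_pos (by positivity))

private lemma sphArea_pos {n : ℕ} (hn : 1 ≤ n) : 0 < sphArea n := by
  have h0 : (0:ℝ) < (n:ℝ) / 2 := by
    have : (0:ℝ) < (n:ℝ) := by exact_mod_cast hn
    linarith
  exact div_pos (by positivity) (Real.Gamma_pos_of_pos h0)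

private lemma volume_unitBall {n : ℕ} (hn : 1 ≤ n) :
    volume (ball (0 : Euc n) 1) = ENNReal.ofReal (ballVol n) := by
  haveI : Nonempty (Fin n) := ⟨⟨0, hn⟩⟩
  rw [EuclideanSpace.volume_ball]
  rw [ENNReal.ofReal_one, one_pow, one_mul, Fintype.card_fin]
  have h : Real.sqrt Real.pi ^ n = Real.pi ^ ((n:ℝ)/2) := by
    rw [Real.sqrt_eq_rpow, ← Real.rpow_natCast (Real.pi ^ ((1:ℝ)/2)) n,
      ← Real.rpow_mul Real.pi_pos.le]
    congr 1
    ring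
  congr 1
  rw [ballVol, h, add_comm ((1:ℝ)) ((n:ℝ)/2)]

private lemma sphereMeasure_univ_toReal {n : ℕ} (hn : 1 ≤ n) :
    ((sphereMeasure n) univ).toReal = sphArea n := by
  have h1 : Module.finrank ℝ (Euc n) = n := finrank_euclideanSpace_fin
  rw [sphereMeasure, Measure.toSphere_apply_univ, volume_unitBall hn, h1,
    ENNReal.toReal_mul, ENNReal.toReal_ofReal (ballVol_pos n).le, ENNReal.toReal_natCast]
  have hnp : (0:ℝ) < (n:ℝ) := by exact_mod_cast hn
  have h2 : (0:ℝ) < (n:ℝ)/2 := by linarith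
  rw [ballVol, sphArea, add_comm, Real.Gamma_add_one h2.ne']
  have hg : 0 < Real.Gamma ((n:ℝ)/2) := Real.Gamma_pos_of_pos h2
  field_simp

private lemma mixedNorm_radial {n : ℕ} (hn : 1 ≤ n) {p pb : ℝ} (hp : 0 < p) (hpb : 0 < pb)
    (H : ℝ → ℝ) (f : Euc n → ℝ) (hf : ∀ x, f x = H ‖x‖) :
    mixedNorm n p pb f
      = sphArea n ^ (1 / pb) * (∫ r in Ioi (0:ℝ), |H r| ^ p * r ^ ((n:ℝ) - 1)) ^ (1 / p) := by
  have hω : 0 < sphArea n := sphArea_pos hn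
  unfold mixedNorm
  have hcong : ∀ r ∈ Ioi (0:ℝ),
      (∫ θ, |f (r • (θ : Euc n))| ^ pb ∂(sphereMeasure n)) ^ (p / pb) * r ^ ((n : ℝ) - 1)
        = sphArea n ^ (p/pb) * (|H r| ^ p * r ^ ((n:ℝ)-1)) := by
    intro r hr
    have h1 : ∀ θ : sphere (0 : Euc n) 1, |f (r • (θ : Euc n))| ^ pb = |H r| ^ pb := by
      intro θ
      rw [hf, norm_smul, mem_sphere_zero_iff_norm.mp θ.2, mul_one, Real.norm_eq_abs,
        abs_of_pos (show (0:ℝ) < r from hr)]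
    rw [integral_congr_ae (Filter.Eventually.of_forall h1), integral_const, smul_eq_mul,
      measureReal_def, sphereMeasure_univ_toReal hn,
      Real.mul_rpow hω.le (Real.rpow_nonneg (abs_nonneg _) _),
      ← Real.rpow_mul (abs_nonneg _)]
    have h2 : pb * (p / pb) = p := by field_simp
    rw [h2, mul_assoc]
  rw [setIntegral_congr_fun measurableSet_Ioi hcong, integral_const_mul,
    Real.mul_rpow (Real.rpow_nonneg hω.le _)
      (setIntegral_nonneg measurableSet_Ioi fun r hr =>
        mul_nonneg (Real.rpow_nonneg (abs_nonneg _) _) (Real.rpow_nonneg (le_of_lt hr) _)),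
    ← Real.rpow_mul hω.le]
  congr 2
  field_simp


set_option maxHeartbeats 1000000 in
/-- lower bound for the mixed radial-angular norm of H f_ε. -/
theorem hardy_f_eps_lower (n : ℕ) (hn : 2 ≤ n) (p pb1 pb2 ε : ℝ)
    (hp : 1 < p) (hpb1 : 1 < pb1) (hpb2 : 1 < pb2) (hε0 : 0 < ε) (hε1 : ε < 1) :
    mixedNorm n p pb2
        (hardyOp n fun x : Euc n => if ‖x‖ ≤ 1 then 0 else ‖x‖ ^ (-((n : ℝ) / p + ε)))
      ≥ n * ε ^ ε * ((1 - ε ^ ((n : ℝ) - ε - n / p)) / ((n : ℝ) - ε - n / p)) *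
          sphArea n ^ (1 / pb2 - 1 / pb1) *
          mixedNorm n p pb1
            (fun x : Euc n => if ‖x‖ ≤ 1 then 0 else ‖x‖ ^ (-((n : ℝ) / p + ε))) := by
  have hn1 : 1 ≤ n := le_trans (by norm_num) hn
  have hp0 : (0:ℝ) < p := lt_trans one_pos hp
  have hnpos : (0:ℝ) < (n:ℝ) := by exact_mod_cast Nat.lt_of_lt_of_le Nat.zero_lt_one hn1
  have hω : 0 < sphArea n := sphArea_pos hn1
  have hεp : 0 < ε * p := mul_pos hε0 hp0
  -- radial profiles
  set G : ℝ → ℝ := fun t => if t ≤ 1 then (0:ℝ) else t ^ (-((n : ℝ) / p + ε)) with hG_def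
  set Hfun : ℝ → ℝ := fun t => (ballVol n * t ^ n)⁻¹ *
      ∫ y in {y : Euc n | ‖y‖ < t},
        (if ‖y‖ ≤ 1 then (0:ℝ) else ‖y‖ ^ (-((n : ℝ) / p + ε))) with hHfun_def
  rw [ge_iff_le,
    mixedNorm_radial hn1 hp0 (lt_trans one_pos hpb1) G _ (fun x => rfl),
    mixedNorm_radial hn1 hp0 (lt_trans one_pos hpb2) Hfun
      (hardyOp n fun x : Euc n => if ‖x‖ ≤ 1 then (0:ℝ) else ‖x‖ ^ (-((n : ℝ) / p + ε)))
      (fun x => rfl)]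
  set α : ℝ := (n : ℝ) - ε - (n:ℝ) / p with hα_def
  -- the f_ε integral
  have hexp1 : -((n:ℝ)/p + ε) * p + ((n:ℝ) - 1) = -1 - ε * p := by
    field_simp
    ring
  have hIf : (∫ r in Ioi (0:ℝ), |G r| ^ p * r ^ ((n:ℝ) - 1)) = (ε*p)⁻¹ := by
    have hcong : ∀ r ∈ Ioi (0:ℝ), |G r| ^ p * r ^ ((n:ℝ)-1)
        = Set.indicator (Ioi (1:ℝ)) (fun s => s ^ (-1 - ε*p)) r := by
      intro r hr
      simp only [mem_Ioi] at hr
      by_cases h1 : r ≤ 1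
      · rw [indicator_of_notMem (by simpa using h1), hG_def]
        simp only [if_pos h1, abs_zero, Real.zero_rpow hp0.ne', zero_mul]
      · push_neg at h1
        rw [Set.indicator_of_mem (mem_Ioi.mpr h1), hG_def]
        simp only [not_le.mpr h1, if_false]
        rw [abs_of_nonneg (Real.rpow_nonneg hr.le _), ← Real.rpow_mul hr.le,
          ← Real.rpow_add hr, hexp1]
    rw [setIntegral_congr_fun measurableSet_Ioi hcong, integral_indicator measurableSet_Ioi,
      Measure.restrict_restrict measurableSet_Ioi]
    have hIoi : Ioi (1:ℝ) ∩ Ioi 0 = Ioi 1 :=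
      inter_eq_left.mpr fun s hs => show (0:ℝ) < s from lt_trans one_pos hs
    rw [hIoi, integral_Ioi_rpow_of_lt (by linarith) one_pos, Real.one_rpow,
      show (-1 - ε * p + 1 : ℝ) = -(ε*p) by ring, neg_div_neg_eq, one_div]
  rw [hIf]
  by_cases hα0 : α = 0
  · rw [hα0]
    simp only [Real.rpow_zero, sub_self, zero_div, mul_zero, zero_mul]
    exact mul_nonneg (Real.rpow_nonneg hω.le _)
      (Real.rpow_nonneg (setIntegral_nonneg measurableSet_Ioi fun r hr =>
        mul_nonneg (Real.rpow_nonneg (abs_nonneg _) _) (Real.rpow_nonneg (le_of_lt hr) _)) _)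
  -- Hardy profile
  have hball : ∀ t : ℝ, MeasurableSet {y : Euc n | ‖y‖ < t} := fun t =>
    measurableSet_lt measurable_norm measurable_const
  have hH0 : ∀ t : ℝ, t ≤ 1 → Hfun t = 0 := by
    intro t ht
    have h0 : (∫ y in {y : Euc n | ‖y‖ < t},
        (if ‖y‖ ≤ 1 then (0:ℝ) else ‖y‖ ^ (-((n:ℝ)/p + ε))))
        = ∫ _y in {y : Euc n | ‖y‖ < t}, (0:ℝ) :=
      setIntegral_congr_fun (hball t) fun y hy => if_pos (le_trans (le_of_lt hy) ht)
    rw [hHfun_def]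
    simp only
    rw [h0, integral_zero, mul_zero]
  haveI : Nontrivial (Euc n) :=
    Module.nontrivial_of_finrank_pos (R := ℝ)
      (by rw [finrank_euclideanSpace_fin]; omega : 0 < Module.finrank ℝ (Euc n))
  have hHform : ∀ t : ℝ, 1 < t →
      Hfun t = (n:ℝ) * ((t ^ α - 1) / α) * t ^ (-(n:ℝ)) := by
    intro t ht
    have ht0 : (0:ℝ) < t := lt_trans one_pos ht
    have hsub : (∫ y in {y : Euc n | ‖y‖ < t},
        (if ‖y‖ ≤ 1 then (0:ℝ) else ‖y‖ ^ (-((n:ℝ)/p + ε))))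
        = ∫ y : Euc n, (fun s : ℝ => if s < t then G s else 0) ‖y‖ := by
      rw [← integral_indicator (hball t)]
      refine integral_congr_ae (Filter.Eventually.of_forall fun y => ?_)
      by_cases hy : ‖y‖ < t
      · rw [Set.indicator_of_mem (show y ∈ {y : Euc n | ‖y‖ < t} from hy)]
        simp only [if_pos hy, hG_def]
      · rw [Set.indicator_of_notMem (show y ∉ {y : Euc n | ‖y‖ < t} from hy)]
        simp only [if_neg hy]
    have hinner : (∫ s in Ioi (0:ℝ),
        s ^ (n - 1) • ((fun s : ℝ => if s < t then G s else 0) s))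
        = (t ^ α - 1) / α := by
      have hcong2 : ∀ s ∈ Ioi (0:ℝ), s ^ (n - 1) • ((fun s : ℝ => if s < t then G s else 0) s)
          = Set.indicator (Ioo (1:ℝ) t) (fun s => s ^ (α - 1)) s := by
        intro s hs
        simp only [smul_eq_mul]
        by_cases h1 : s ≤ 1
        · rw [Set.indicator_of_notMem
            (show s ∉ Ioo (1:ℝ) t from fun hmem => absurd hmem.1 (not_lt.mpr h1))]
          by_cases h2 : s < t
          · rw [if_pos h2, hG_def]
            simp only [if_pos h1, mul_zero]
          · rw [if_neg h2, mul_zero]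
        · push_neg at h1
          by_cases h2 : s < t
          · rw [if_pos h2, Set.indicator_of_mem (mem_Ioo.mpr ⟨h1, h2⟩), hG_def]
            simp only [not_le.mpr h1, if_false]
            rw [← Real.rpow_natCast s (n - 1), ← Real.rpow_add (lt_trans one_pos h1)]
            congr 1
            rw [Nat.cast_sub hn1, Nat.cast_one, hα_def]
            ring
          · rw [if_neg h2, Set.indicator_of_notMem
              (show s ∉ Ioo (1:ℝ) t from fun hmem => absurd hmem.2 h2), mul_zero]
      rw [setIntegral_congr_fun measurableSet_Ioi hcong2, integral_indicator measurableSet_Ioo,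
        Measure.restrict_restrict measurableSet_Ioo,
        show Ioo (1:ℝ) t ∩ Ioi 0 = Ioo 1 t from
          inter_eq_left.mpr fun s hs => lt_trans one_pos hs.1,
        Measure.restrict_congr_set Ioo_ae_eq_Ioc, ← intervalIntegral.integral_of_le ht.le,
        integral_rpow (Or.inr ⟨fun h => hα0 (by linarith), Set.notMem_uIcc_of_lt one_pos ht0⟩),
        show (α - 1 + 1 : ℝ) = α from by ring, Real.one_rpow]
    rw [hHfun_def]
    simp only
    rw [hsub, integral_fun_norm_addHaar volume (fun s : ℝ => if s < t then G s else 0),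
      finrank_euclideanSpace_fin, hinner, measureReal_def, volume_unitBall hn1,
      ENNReal.toReal_ofReal (ballVol_pos n).le, nsmul_eq_mul, smul_eq_mul]
    rw [← Real.rpow_natCast t n, Real.rpow_neg ht0.le]
    have halg : ∀ A T X N : ℝ, A ≠ 0 → (A * T)⁻¹ * (N * (A * X)) = N * X * T⁻¹ := by
      intro A T X N hA
      rw [mul_inv]
      calc A⁻¹ * T⁻¹ * (N * (A * X)) = A⁻¹ * A * (N * X * T⁻¹) := by ring
        _ = N * X * T⁻¹ := by rw [inv_mul_cancel₀ hA, one_mul]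
    exact halg (ballVol n) (t ^ ((n:ℕ):ℝ)) ((t ^ α - 1)/α) (n:ℝ) (ballVol_pos n).ne'
  -- positivity of the constant K
  set K : ℝ := (1 - ε ^ α) / α with hK_def
  have hK : 0 < K := by
    rcases lt_or_gt_of_ne hα0 with h | h
    · have h1 : 1 < ε ^ α := (Real.one_lt_rpow_iff_of_pos hε0).mpr (Or.inr ⟨hε1, h⟩)
      rw [hK_def]
      exact div_pos_iff.mpr (Or.inr ⟨by linarith, h⟩)
    · have h1 : ε ^ α < 1 := Real.rpow_lt_one hε0.le hε1 h
      rw [hK_def]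
      exact div_pos (by linarith) h
  have hinv1 : (1:ℝ) < ε⁻¹ := (one_lt_inv₀ hε0).mpr hε1
  have hinv0 : (0:ℝ) < ε⁻¹ := lt_trans one_pos hinv1
  -- pointwise lower bound on the Hardy profile
  have hHlow : ∀ r : ℝ, ε⁻¹ ≤ r → (n:ℝ) * K * r ^ (-((n:ℝ)/p + ε)) ≤ Hfun r := by
    intro r hr
    have hr1 : 1 < r := lt_of_lt_of_le hinv1 hr
    have hr0 : (0:ℝ) < r := lt_trans one_pos hr1
    rw [hHform r hr1]
    have hsplit : r ^ (-((n:ℝ)/p + ε)) = r ^ α * r ^ (-(n:ℝ)) := by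
      rw [← Real.rpow_add hr0]
      congr 1
      rw [hα_def]
      ring
    have hεrge : 1 ≤ ε * r := by
      rw [← mul_inv_cancel₀ hε0.ne']
      exact mul_le_mul_of_nonneg_left hr hε0.le
    have hA : (0:ℝ) < r ^ α := Real.rpow_pos_of_pos hr0 _
    have key : K * r ^ α ≤ (r ^ α - 1) / α := by
      have expand : ((r ^ α - 1) / α - K * r ^ α) * α = ε ^ α * r ^ α - 1 := by
        rw [hK_def]
        field_simp
        ring
      have h3 : (r ^ α - 1)/α - K * r ^ α = (ε ^ α * r ^ α - 1)/α :=
        (eq_div_iff hα0).mpr expand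
      rcases lt_or_gt_of_ne hα0 with h | h
      · have h1 : ε ^ α * r ^ α ≤ 1 := by
          rw [← Real.mul_rpow hε0.le hr0.le]
          exact Real.rpow_le_one_of_one_le_of_nonpos hεrge h.le
        have h4 : 0 ≤ (ε ^ α * r ^ α - 1)/α :=
          div_nonneg_iff.mpr (Or.inr ⟨by linarith, h.le⟩)
        linarith [h3, h4]
      · have h1 : 1 ≤ ε ^ α * r ^ α := by
          rw [← Real.mul_rpow hε0.le hr0.le]
          exact Real.one_le_rpow hεrge h.le
        have h4 : 0 ≤ (ε ^ α * r ^ α - 1)/α :=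
          div_nonneg (by linarith) h.le
        linarith [h3, h4]
    have hrn : (0:ℝ) < r ^ (-(n:ℝ)) := Real.rpow_pos_of_pos hr0 _
    rw [hsplit]
    calc (n:ℝ) * K * (r ^ α * r ^ (-(n:ℝ))) = (n:ℝ) * (K * r ^ α) * r ^ (-(n:ℝ)) := by ring
      _ ≤ (n:ℝ) * ((r ^ α - 1)/α) * r ^ (-(n:ℝ)) :=
          mul_le_mul_of_nonneg_right (mul_le_mul_of_nonneg_left key hnpos.le) hrn.le
  -- integrability of the Hardy-profile integrand
  have hq : ((max α 0 - (n:ℝ)) * p + ((n:ℝ) - 1)) < -1 := by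
    rcases le_or_gt α 0 with h | h
    · rw [max_eq_right h]
      have h2 : (n:ℝ) * 1 < (n:ℝ) * p := (mul_lt_mul_iff_right₀ hnpos).mpr hp
      nlinarith
    · rw [max_eq_left h.le]
      have h2 : (α - (n:ℝ)) * p = -((n:ℝ) + ε * p) := by
        rw [hα_def]
        field_simp
        ring
      rw [h2]
      nlinarith [hεp]
  have habs : (0:ℝ) < |α| := abs_pos.mpr hα0
  have hΨle : ∀ r ∈ Ioi (1:ℝ), |(n:ℝ) * ((r ^ α - 1)/α) * r ^ (-(n:ℝ))| ^ p * r ^ ((n:ℝ)-1)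
      ≤ (2 * n / |α|) ^ p * r ^ ((max α 0 - (n:ℝ)) * p + ((n:ℝ) - 1)) := by
    intro r hr
    simp only [mem_Ioi] at hr
    have hr0 : (0:ℝ) < r := lt_trans one_pos hr
    have h1 : |(n:ℝ) * ((r ^ α - 1)/α) * r ^ (-(n:ℝ))| ≤ (2*n/|α|) * r ^ (max α 0 - (n:ℝ)) := by
      rw [abs_mul, abs_mul, abs_of_nonneg hnpos.le,
        abs_of_nonneg (Real.rpow_nonneg hr0.le _), abs_div]
      have h3 : r ^ α ≤ r ^ (max α 0) := Real.rpow_le_rpow_of_exponent_le hr.le (le_max_left _ _)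
      have h4 : (1:ℝ) ≤ r ^ (max α 0) := by
        rw [show (1:ℝ) = r ^ (0:ℝ) from (Real.rpow_zero r).symm]
        exact Real.rpow_le_rpow_of_exponent_le hr.le (le_max_right _ _)
      have h2 : |r ^ α - 1| ≤ 2 * r ^ (max α 0) := by
        rw [abs_sub_le_iff]
        constructor <;> nlinarith [Real.rpow_pos_of_pos hr0 α]
      calc (n:ℝ) * (|r ^ α - 1|/|α|) * r ^ (-(n:ℝ))
          ≤ (n:ℝ) * ((2 * r ^ (max α 0))/|α|) * r ^ (-(n:ℝ)) :=
            mul_le_mul_of_nonneg_right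
              (mul_le_mul_of_nonneg_left ((div_le_div_iff_of_pos_right habs).mpr h2) hnpos.le)
              (Real.rpow_nonneg hr0.le _)
        _ = (2*n/|α|) * r ^ (max α 0 - (n:ℝ)) := by
            rw [sub_eq_add_neg, Real.rpow_add hr0]
            ring
    calc |(n:ℝ) * ((r ^ α - 1)/α) * r ^ (-(n:ℝ))| ^ p * r ^ ((n:ℝ)-1)
        ≤ ((2*n/|α|) * r ^ (max α 0 - (n:ℝ))) ^ p * r ^ ((n:ℝ)-1) :=
          mul_le_mul_of_nonneg_right (Real.rpow_le_rpow (abs_nonneg _) h1 hp0.le)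
            (Real.rpow_nonneg hr0.le _)
      _ = (2*n/|α|) ^ p * r ^ ((max α 0 - (n:ℝ)) * p + ((n:ℝ) - 1)) := by
          rw [Real.mul_rpow (by positivity) (Real.rpow_nonneg hr0.le _),
            ← Real.rpow_mul hr0.le, mul_assoc, ← Real.rpow_add hr0]
  have hΨcont : ContinuousOn
      (fun r : ℝ => |(n:ℝ) * ((r ^ α - 1)/α) * r ^ (-(n:ℝ))| ^ p * r ^ ((n:ℝ)-1)) (Ioi 1) := by
    have c1 : ContinuousOn (fun r : ℝ => r ^ α) (Ioi (1:ℝ)) :=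
      ContinuousOn.rpow_const continuousOn_id fun x hx => Or.inl (ne_of_gt (lt_trans one_pos hx))
    have c2 : ContinuousOn (fun r : ℝ => r ^ (-(n:ℝ))) (Ioi (1:ℝ)) :=
      ContinuousOn.rpow_const continuousOn_id fun x hx => Or.inl (ne_of_gt (lt_trans one_pos hx))
    have c3 : ContinuousOn (fun r : ℝ => r ^ ((n:ℝ)-1)) (Ioi (1:ℝ)) :=
      ContinuousOn.rpow_const continuousOn_id fun x hx => Or.inl (ne_of_gt (lt_trans one_pos hx))
    have c4 : ContinuousOn (fun r : ℝ => |(n:ℝ) * ((r ^ α - 1)/α) * r ^ (-(n:ℝ))|) (Ioi (1:ℝ)) :=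
      ((continuousOn_const.mul ((c1.sub continuousOn_const).div_const α)).mul c2).abs
    exact (c4.rpow_const fun x hx => Or.inr hp0.le).mul c3
  have hΦint : IntegrableOn (fun r : ℝ => |Hfun r| ^ p * r ^ ((n:ℝ)-1)) (Ioi (0:ℝ)) := by
    rw [show Ioi (0:ℝ) = Ioc 0 1 ∪ Ioi 1 from (Ioc_union_Ioi_eq_Ioi zero_le_one).symm]
    refine IntegrableOn.union ?_ ?_
    · refine (integrableOn_zero).congr_fun (fun r hr => ?_) measurableSet_Ioc
      show (0:ℝ) = _
      rw [hH0 r hr.2, abs_zero, Real.zero_rpow hp0.ne', zero_mul]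
    · refine IntegrableOn.congr_fun
        (f := fun r : ℝ => |(n:ℝ) * ((r ^ α - 1)/α) * r ^ (-(n:ℝ))| ^ p * r ^ ((n:ℝ)-1))
        ?_ (fun r hr => ?_) measurableSet_Ioi
      · refine Integrable.mono'
          ((integrableOn_Ioi_rpow_of_lt hq one_pos).const_mul ((2*n/|α|) ^ p))
          (hΨcont.aestronglyMeasurable measurableSet_Ioi) ?_
        filter_upwards [ae_restrict_mem measurableSet_Ioi] with r hr
        rw [Real.norm_eq_abs, abs_of_nonneg (mul_nonneg (Real.rpow_nonneg (abs_nonneg _) _)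
          (Real.rpow_nonneg (le_of_lt (lt_trans one_pos hr)) _))]
        exact hΨle r hr
      · rw [hHform r hr]
  -- lower bound for the Hardy-profile integral
  have hIH : ((n:ℝ)*K) ^ p * (ε ^ (ε*p) * (ε*p)⁻¹)
      ≤ ∫ r in Ioi (0:ℝ), |Hfun r| ^ p * r ^ ((n:ℝ)-1) := by
    have step1 : ∫ r in Ioi ε⁻¹, ((n:ℝ)*K) ^ p * r ^ (-1 - ε*p)
        ≤ ∫ r in Ioi ε⁻¹, |Hfun r| ^ p * r ^ ((n:ℝ)-1) := by
      refine setIntegral_mono_on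
        ((integrableOn_Ioi_rpow_of_lt (by linarith) hinv0).const_mul _)
        (hΦint.mono_set (Ioi_subset_Ioi hinv0.le)) measurableSet_Ioi ?_
      intro r hr
      simp only [mem_Ioi] at hr
      have hr0 : (0:ℝ) < r := lt_trans hinv0 hr
      have h1 : (n:ℝ) * K * r ^ (-((n:ℝ)/p + ε)) ≤ |Hfun r| :=
        le_trans (hHlow r hr.le) (le_abs_self _)
      have h2 : ((n:ℝ) * K * r ^ (-((n:ℝ)/p + ε))) ^ p ≤ |Hfun r| ^ p :=
        Real.rpow_le_rpow
          (mul_nonneg (mul_nonneg hnpos.le hK.le) (Real.rpow_nonneg hr0.le _)) h1 hp0.le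
      calc ((n:ℝ)*K) ^ p * r ^ (-1 - ε*p)
          = ((n:ℝ) * K * r ^ (-((n:ℝ)/p + ε))) ^ p * r ^ ((n:ℝ)-1) := by
            rw [Real.mul_rpow (mul_nonneg hnpos.le hK.le) (Real.rpow_nonneg hr0.le _),
              ← Real.rpow_mul hr0.le, mul_assoc, ← Real.rpow_add hr0, hexp1]
        _ ≤ |Hfun r| ^ p * r ^ ((n:ℝ)-1) :=
            mul_le_mul_of_nonneg_right h2 (Real.rpow_nonneg hr0.le _)
    have step2 : ∫ r in Ioi ε⁻¹, |Hfun r| ^ p * r ^ ((n:ℝ)-1)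
        ≤ ∫ r in Ioi (0:ℝ), |Hfun r| ^ p * r ^ ((n:ℝ)-1) := by
      refine setIntegral_mono_set hΦint ?_ (HasSubset.Subset.eventuallyLE (Ioi_subset_Ioi hinv0.le))
      filter_upwards [ae_restrict_mem measurableSet_Ioi] with r hr
      exact mul_nonneg (Real.rpow_nonneg (abs_nonneg _) _) (Real.rpow_nonneg (le_of_lt hr) _)
    have hval : ∫ r in Ioi ε⁻¹, ((n:ℝ)*K) ^ p * r ^ (-1 - ε*p)
        = ((n:ℝ)*K) ^ p * (ε ^ (ε*p) * (ε*p)⁻¹) := by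
      rw [integral_const_mul, integral_Ioi_rpow_of_lt (by linarith) hinv0,
        show (-1 - ε*p + 1 : ℝ) = -(ε*p) from by ring, neg_div_neg_eq,
        Real.rpow_neg hinv0.le, Real.inv_rpow hε0.le, inv_inv, div_eq_mul_inv]
    calc ((n:ℝ)*K) ^ p * (ε ^ (ε*p) * (ε*p)⁻¹)
        = ∫ r in Ioi ε⁻¹, ((n:ℝ)*K) ^ p * r ^ (-1 - ε*p) := hval.symm
      _ ≤ ∫ r in Ioi ε⁻¹, |Hfun r| ^ p * r ^ ((n:ℝ)-1) := step1
      _ ≤ _ := step2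
  -- final assembly
  have hBnn : (0:ℝ) ≤ ((n:ℝ)*K) ^ p * (ε ^ (ε*p) * (ε*p)⁻¹) :=
    mul_nonneg (Real.rpow_nonneg (mul_nonneg hnpos.le hK.le) _)
      (mul_nonneg (Real.rpow_nonneg hε0.le _) (inv_nonneg.mpr hεp.le))
  have step : (((n:ℝ)*K) ^ p * (ε ^ (ε*p) * (ε*p)⁻¹)) ^ (1/p)
      ≤ (∫ r in Ioi (0:ℝ), |Hfun r| ^ p * r ^ ((n:ℝ)-1)) ^ (1/p) :=
    Real.rpow_le_rpow hBnn hIH (by positivity)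
  have hBval : (((n:ℝ)*K) ^ p * (ε ^ (ε*p) * (ε*p)⁻¹)) ^ (1/p)
      = (n:ℝ) * K * (ε ^ ε * ((ε*p)⁻¹) ^ (1/p)) := by
    rw [Real.mul_rpow (Real.rpow_nonneg (mul_nonneg hnpos.le hK.le) _)
        (mul_nonneg (Real.rpow_nonneg hε0.le _) (inv_nonneg.mpr hεp.le)),
      Real.mul_rpow (Real.rpow_nonneg hε0.le _) (inv_nonneg.mpr hεp.le),
      ← Real.rpow_mul (mul_nonneg hnpos.le hK.le),
      ← Real.rpow_mul hε0.le,
      mul_one_div_cancel hp0.ne', Real.rpow_one,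
      show ε * p * (1/p) = ε from by field_simp]
  have hωcomb : sphArea n ^ ((1:ℝ)/pb2 - 1/pb1) * sphArea n ^ ((1:ℝ)/pb1)
      = sphArea n ^ ((1:ℝ)/pb2) := by
    rw [← Real.rpow_add hω]
    congr 1
    ring
  calc (n:ℝ) * ε ^ ε * K * sphArea n ^ (1/pb2 - 1/pb1)
        * (sphArea n ^ (1/pb1) * ((ε*p)⁻¹) ^ (1/p))
      = sphArea n ^ ((1:ℝ)/pb2) * ((((n:ℝ)*K) ^ p * (ε ^ (ε*p) * (ε*p)⁻¹)) ^ (1/p)) := by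
        rw [hBval, ← hωcomb]
        ring
    _ ≤ _ := mul_le_mul_of_nonneg_left step (Real.rpow_nonneg hω.le _)


end
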